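/- Let G be a finite simple graph with n vertices and m edges, and let H be the graph obtained from G by adding m + n + 1 new vertices v, u_1, ..., u_{m+n} and joining v by an edge to every vertex of V(G) ∪ {u_1, ..., u_{m+n}} (the u_i are pairwise nonadjacent and nonadjacent to V(G)). Then rho_e^o(H) = m + n + alpha(G). -/

import Mathlib

open scoped Classical

variable {V : Type*}

/-- Two edges `e₁, e₂` have a common edge in `G` if some edge of `G`, different from both,
joins an endvertex of `e₁` to an endvertex of `e₂`. -/
def HasCommonEdge (G : SimpleGraph V) (e₁ e₂ : Sym2 V) : Prop :=
  ∃ x y : V, x ∈ e₁ ∧ y ∈ e₂ ∧ G.Adj x y ∧ s(x, y) ≠ e₁ ∧ s(x, y) ≠ e₂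

/-- `B` is an edge open packing set of `G`: a set of edges of `G` no two distinct members
of which have a common edge in `G`. -/
def IsEOP (G : SimpleGraph V) (B : Set (Sym2 V)) : Prop :=
  B ⊆ G.edgeSet ∧ ∀ e₁ ∈ B, ∀ e₂ ∈ B, e₁ ≠ e₂ → ¬ HasCommonEdge G e₁ e₂

/-- The edge open packing number of `G`: the maximum cardinality of an EOP set of `G`. -/
noncomputable def eopNum (G : SimpleGraph V) : ℕ :=
  sSup {n | ∃ B : Set (Sym2 V), IsEOP G B ∧ B.ncard = n}

/-- The independence number of `G`. -/
noncomputable def indepNum (G : SimpleGraph V) : ℕ :=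
  sSup {n | ∃ I : Set V, (∀ a ∈ I, ∀ b ∈ I, ¬ G.Adj a b) ∧ I.ncard = n}

/-- The graph `H` obtained from `G` by adding `k + 1` new vertices
`v = Sum.inr 0` and `u_i = Sum.inr i` (for `i ≠ 0`) and joining `v` by an edge to every
other vertex; the vertices `u_i` are pairwise nonadjacent and nonadjacent to `V(G)`. -/
def auxGraph (G : SimpleGraph V) (k : ℕ) : SimpleGraph (V ⊕ Fin (k + 1)) where
  Adj x y :=
    (∃ a b : V, x = Sum.inl a ∧ y = Sum.inl b ∧ G.Adj a b) ∨
    (x = Sum.inr 0 ∧ y ≠ Sum.inr 0) ∨ (y = Sum.inr 0 ∧ x ≠ Sum.inr 0)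
  symm := by
    constructor
    rintro x y (⟨a, b, rfl, rfl, h⟩ | ⟨rfl, h⟩ | ⟨rfl, h⟩)
    · exact Or.inl ⟨b, a, rfl, rfl, h.symm⟩
    · exact Or.inr (Or.inr ⟨rfl, h⟩)
    · exact Or.inr (Or.inl ⟨rfl, h⟩)
  loopless := by
    constructor
    rintro x (⟨a, b, h1, h2, h⟩ | ⟨rfl, h⟩ | ⟨rfl, h⟩)
    · subst h1; cases h2; exact G.irrefl h
    · exact h rfl
    · exact h rfl

-- ### auxiliary lemmas


private lemma pair_left_inj {α : Type*} (v : α) : Function.Injective (fun w => s(v, w)) := by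
  intro a b h
  simp only [Sym2.eq_iff] at h
  rcases h with ⟨_, rfl⟩ | ⟨rfl, rfl⟩ <;> rfl

private lemma auxAdj {G : SimpleGraph V} {k : ℕ} {x y : V ⊕ Fin (k + 1)} :
    (auxGraph G k).Adj x y ↔
      (∃ a b : V, x = Sum.inl a ∧ y = Sum.inl b ∧ G.Adj a b) ∨
      (x = Sum.inr 0 ∧ y ≠ Sum.inr 0) ∨ (y = Sum.inr 0 ∧ x ≠ Sum.inr 0) := Iff.rfl

private lemma indep_le_indepNum [Fintype V] (G : SimpleGraph V) (I : Set V)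
    (hI : ∀ a ∈ I, ∀ b ∈ I, ¬ G.Adj a b) : I.ncard ≤ indepNum G := by
  apply le_csSup
  · refine ⟨Fintype.card V, ?_⟩
    rintro x ⟨J, -, rfl⟩
    simpa [Set.ncard_univ, Nat.card_eq_fintype_card] using
      Set.ncard_le_ncard (Set.subset_univ J) Set.finite_univ
  · exact ⟨I, hI, rfl⟩

private lemma exists_max_indep [Fintype V] (G : SimpleGraph V) :
    ∃ I : Set V, (∀ a ∈ I, ∀ b ∈ I, ¬ G.Adj a b) ∧ I.ncard = indepNum G := by
  have h : indepNum G ∈ {n | ∃ I : Set V, (∀ a ∈ I, ∀ b ∈ I, ¬ G.Adj a b) ∧ I.ncard = n} := by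
    apply Nat.sSup_mem
    · exact ⟨0, ∅, by simp, by simp⟩
    · refine ⟨Fintype.card V, ?_⟩
      rintro x ⟨J, -, rfl⟩
      simpa [Set.ncard_univ, Nat.card_eq_fintype_card] using
        Set.ncard_le_ncard (Set.subset_univ J) Set.finite_univ
  exact h

private lemma star_eop {α : Type*} (H : SimpleGraph α) (v : α) (S : Set α)
    (hadj : ∀ w ∈ S, H.Adj v w) (hind : ∀ w₁ ∈ S, ∀ w₂ ∈ S, ¬ H.Adj w₁ w₂) :
    IsEOP H ((fun w => s(v, w)) '' S) := by
  constructor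
  · rintro e ⟨w, hw, rfl⟩; exact hadj w hw
  · rintro e₁ ⟨w₁, hw₁, rfl⟩ e₂ ⟨w₂, hw₂, rfl⟩ hne ⟨x, y, hx, hy, hxy, h1, h2⟩
    rw [Sym2.mem_iff] at hx hy
    rcases hx with rfl | rfl <;> rcases hy with rfl | rfl
    · exact H.irrefl hxy
    · exact h2 rfl
    · exact h1 (Sym2.eq_swap)
    · exact hind _ hw₁ _ hw₂ hxy

private lemma star_indep {α : Type*} (H : SimpleGraph α) (v : α) (B : Set (Sym2 α))
    (hB : IsEOP H B) :
    ∀ w₁, w₁ ≠ v → s(v, w₁) ∈ B → ∀ w₂, w₂ ≠ v → s(v, w₂) ∈ B → w₁ ≠ w₂ →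
      ¬ H.Adj w₁ w₂ := by
  intro w₁ h1 hm1 w₂ h2 hm2 hne hadj
  apply hB.2 _ hm1 _ hm2 (fun h => hne (pair_left_inj v h))
  refine ⟨w₁, w₂, by simp, by simp, hadj, ?_, ?_⟩
  · intro h
    rcases Sym2.eq_iff.mp h with ⟨h', -⟩ | ⟨-, h'⟩
    · exact h1 h'
    · exact h2 h'
  · intro h
    rcases Sym2.eq_iff.mp h with ⟨h', -⟩ | ⟨-, h'⟩
    · exact h1 h'
    · exact h2 h'

/-- With `n = |V(G)|` and `m = |E(G)|`, the graph `H` obtained from `G` by adding the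
universal-to-be vertex `v` together with `m + n` pendant vertices `u_1, …, u_{m+n}`
attached to `v` satisfies `ρₑᵒ(H) = m + n + α(G)`. -/
theorem stmt12 [Fintype V] (G : SimpleGraph V) (n m : ℕ)
    (hn : n = Fintype.card V) (hm : m = G.edgeSet.ncard) :
    eopNum (auxGraph G (m + n)) = m + n + indepNum G := by
  obtain ⟨I, hI, hIcard⟩ := exists_max_indep G
  set k := m + n with hk
  set v : V ⊕ Fin (k + 1) := Sum.inr 0 with hv
  set H := auxGraph G k with hH
  have hcompl : ({0}ᶜ : Set (Fin (k + 1))).ncard = k := by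
    have := Set.ncard_add_ncard_compl ({0} : Set (Fin (k + 1)))
    simp [Set.ncard_singleton, Nat.card_eq_fintype_card] at this
    omega
  apply le_antisymm
  · -- upper bound
    apply csSup_le
    · exact ⟨0, ∅, ⟨Set.empty_subset _, fun e he => absurd he (Set.notMem_empty _)⟩,
        Set.ncard_empty _⟩
    rintro N ⟨B, hB, rfl⟩
    by_cases hall : ∀ e ∈ B, v ∈ e
    · -- all edges of B contain v
      set S : Set (V ⊕ Fin (k + 1)) := {w | w ≠ v ∧ s(v, w) ∈ B} with hS
      have hBsub : B ⊆ (fun w => s(v, w)) '' S := by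
        intro e he
        obtain ⟨w, rfl⟩ := hall e he
        have hadj : H.Adj v w := hB.1 he
        exact ⟨w, ⟨(hadj.ne).symm, he⟩, rfl⟩
      have hcard1 : B.ncard ≤ S.ncard := by
        calc B.ncard ≤ ((fun w => s(v, w)) '' S).ncard :=
              Set.ncard_le_ncard hBsub (Set.toFinite _)
          _ = S.ncard := Set.ncard_image_of_injective _ (pair_left_inj v)
      set J : Set V := Sum.inl ⁻¹' S with hJ
      have hJind : ∀ a ∈ J, ∀ b ∈ J, ¬ G.Adj a b := by
        intro a ha b hb hab
        have hne : (Sum.inl a : V ⊕ Fin (k + 1)) ≠ Sum.inl b := by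
          simp [hab.ne]
        exact star_indep H v B hB _ ha.1 ha.2 _ hb.1 hb.2 hne
          (Or.inl ⟨a, b, rfl, rfl, hab⟩)
      have hSsub : S ⊆ Sum.inl '' J ∪ Sum.inr '' ({0}ᶜ : Set (Fin (k + 1))) := by
        rintro (a | i) hw
        · exact Or.inl ⟨a, hw, rfl⟩
        · refine Or.inr ⟨i, ?_, rfl⟩
          intro h
          rw [Set.mem_singleton_iff] at h
          exact hw.1 (by simp [hv, h])
      have hScard : S.ncard ≤ indepNum G + k := by
        calc S.ncard ≤ (Sum.inl '' J ∪ Sum.inr '' ({0}ᶜ : Set (Fin (k + 1)))).ncard :=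
              Set.ncard_le_ncard hSsub (Set.toFinite _)
          _ ≤ (Sum.inl '' J : Set (V ⊕ Fin (k+1))).ncard
              + (Sum.inr '' ({0}ᶜ : Set (Fin (k + 1))) : Set (V ⊕ Fin (k+1))).ncard :=
              Set.ncard_union_le _ _
          _ = J.ncard + k := by
              rw [Set.ncard_image_of_injective _ Sum.inl_injective,
                Set.ncard_image_of_injective _ Sum.inr_injective, hcompl]
          _ ≤ indepNum G + k := by
              have := indep_le_indepNum G J hJind
              omega
      omega
    · -- some edge of B avoids v
      push_neg at hall
      obtain ⟨e₀, he₀B, he₀v⟩ := hall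
      -- B splits into edges containing v (at most one) and G-edges (at most m)
      have hGedge : ∀ e ∈ B, v ∉ e → e ∈ Sym2.map Sum.inl '' G.edgeSet := by
        intro e he hev
        have hadj := hB.1 he
        induction e using Sym2.ind with
        | _ x y =>
          rcases (auxAdj.mp hadj) with ⟨a, b, rfl, rfl, hab⟩ | ⟨rfl, -⟩ | ⟨rfl, -⟩
          · exact ⟨s(a, b), hab, rfl⟩
          · exact absurd (Sym2.mem_mk_left _ _) hev
          · exact absurd (Sym2.mem_mk_right _ _) hev
      obtain ⟨a, b, hxa, hyb⟩ : ∃ a b : V, e₀ = s(Sum.inl a, Sum.inl b) ∧ G.Adj a b := by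
        obtain ⟨e', he', heq⟩ := hGedge e₀ he₀B he₀v
        induction e' using Sym2.ind with
        | _ a b => exact ⟨a, b, heq.symm, he'⟩
      -- at most one edge of B contains v
      have hone : ∀ e₁ ∈ B, ∀ e₂ ∈ B, v ∈ e₁ → v ∈ e₂ → e₁ = e₂ := by
        intro e₁ he₁ e₂ he₂ hv1 hv2
        by_contra hne
        obtain ⟨w₁, rfl⟩ := hv1
        obtain ⟨w₂, rfl⟩ := hv2
        have hadj₁ : H.Adj v w₁ := hB.1 he₁
        have hadj₂ : H.Adj v w₂ := hB.1 he₂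
        have hw₁v : w₁ ≠ v := hadj₁.ne.symm
        have hw₂v : w₂ ≠ v := hadj₂.ne.symm
        have hwne : w₁ ≠ w₂ := fun h => hne (by rw [h])
        -- each wᵢ must be inl a or inl b
        have key : ∀ w, w ≠ v → s(v, w) ∈ B → w = Sum.inl a ∨ w = Sum.inl b := by
          intro w hwv hwB
          by_contra hcon
          push_neg at hcon
          -- common edge between e₀ and s(v,w) via s(inl a, v)
          have hne0 : e₀ ≠ s(v, w) := by
            intro h; rw [h] at he₀v; exact he₀v (Sym2.mem_mk_left _ _)
          apply hB.2 _ he₀B _ hwB hne0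
          refine ⟨Sum.inl a, v, ?_, Sym2.mem_mk_left _ _, ?_, ?_, ?_⟩
          · rw [hxa]; exact Sym2.mem_mk_left _ _
          · exact Or.inr (Or.inr ⟨rfl, by simp⟩)
          · intro h; rw [← h] at he₀v; exact he₀v (Sym2.mem_mk_right _ _)
          · intro h
            rcases Sym2.eq_iff.mp h with ⟨h', -⟩ | ⟨h', -⟩
            · exact (by simp [hv] : (Sum.inl a : V ⊕ Fin (k+1)) ≠ v) h'
            · exact hcon.1 h'.symm
        -- so {w₁, w₂} = {inl a, inl b}; they are adjacent: contradiction
        have hadj12 : H.Adj w₁ w₂ := by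
          rcases key w₁ hw₁v he₁ with rfl | rfl <;> rcases key w₂ hw₂v he₂ with rfl | rfl
          · exact absurd rfl hwne
          · exact Or.inl ⟨a, b, rfl, rfl, hyb⟩
          · exact Or.inl ⟨b, a, rfl, rfl, hyb.symm⟩
          · exact absurd rfl hwne
        exact star_indep H v B hB _ hw₁v he₁ _ hw₂v he₂ hwne hadj12
      -- counting
      have hsplit : B ⊆ (Sym2.map Sum.inl '' G.edgeSet) ∪ {e | e ∈ B ∧ v ∈ e} := by
        intro e he
        by_cases hev : v ∈ e
        · exact Or.inr ⟨he, hev⟩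
        · exact Or.inl (hGedge e he hev)
      have hBv : {e | e ∈ B ∧ v ∈ e}.ncard ≤ 1 := by
        rw [Set.ncard_le_one_iff_eq (Set.toFinite _)]
        rcases Set.eq_empty_or_nonempty {e | e ∈ B ∧ v ∈ e} with h | ⟨e, he⟩
        · exact Or.inl h
        · refine Or.inr ⟨e, Set.eq_singleton_iff_unique_mem.mpr ⟨he, ?_⟩⟩
          intro e' he'
          exact hone e' he'.1 e he.1 he'.2 he.2
      have hBG : (Sym2.map Sum.inl '' G.edgeSet : Set (Sym2 (V ⊕ Fin (k+1)))).ncard = m := by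
        rw [Set.ncard_image_of_injective _ (Sym2.map.injective Sum.inl_injective), hm]
      have hind1 : 1 ≤ indepNum G := by
        have := indep_le_indepNum G {a} (by
          rintro x hx y hy
          rw [Set.mem_singleton_iff] at hx hy
          subst hx; subst hy
          exact G.irrefl)
        simpa using this
      have : B.ncard ≤ m + 1 := by
        calc B.ncard ≤ ((Sym2.map Sum.inl '' G.edgeSet) ∪ {e | e ∈ B ∧ v ∈ e}).ncard :=
              Set.ncard_le_ncard hsplit (Set.toFinite _)
          _ ≤ (Sym2.map Sum.inl '' G.edgeSet : Set (Sym2 (V ⊕ Fin (k+1)))).ncard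
              + {e | e ∈ B ∧ v ∈ e}.ncard := Set.ncard_union_le _ _
          _ ≤ m + 1 := by omega
      omega
  · -- lower bound
    apply le_csSup
    · refine ⟨Fintype.card (Sym2 (V ⊕ Fin (k + 1))), ?_⟩
      rintro N ⟨B, -, rfl⟩
      simpa [Set.ncard_univ, Nat.card_eq_fintype_card] using
        Set.ncard_le_ncard (Set.subset_univ B) Set.finite_univ
    · set S : Set (V ⊕ Fin (k + 1)) :=
        Sum.inl '' I ∪ Sum.inr '' ({0}ᶜ : Set (Fin (k + 1))) with hS
      refine ⟨(fun w => s(v, w)) '' S, ?_, ?_⟩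
      · apply star_eop
        · rintro w (⟨a, -, rfl⟩ | ⟨i, hi, rfl⟩)
          · exact Or.inr (Or.inl ⟨rfl, by simp⟩)
          · exact Or.inr (Or.inl ⟨rfl, by simp [Set.mem_compl_iff, Set.mem_singleton_iff] at hi ⊢; exact fun h => hi h⟩)
        · rintro w₁ hw₁ w₂ hw₂ hadj
          rcases auxAdj.mp hadj with ⟨a, b, rfl, rfl, hab⟩ | ⟨h1, -⟩ | ⟨h2, -⟩
          · rcases hw₁ with ⟨a', ha', h⟩ | ⟨i, -, h⟩
            · rcases hw₂ with ⟨b', hb', h'⟩ | ⟨i, -, h'⟩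
              · cases h; cases h'
                exact hI _ ha' _ hb' hab
              · exact absurd h' (by simp)
            · exact absurd h (by simp)
          · rcases hw₁ with ⟨a', -, h⟩ | ⟨i, hi, h⟩
            · exact absurd (h.trans h1) (by simp)
            · rw [← h] at h1
              exact hi (by simpa using h1)
          · rcases hw₂ with ⟨b', -, h⟩ | ⟨i, hi, h⟩
            · exact absurd (h.trans h2) (by simp)
            · rw [← h] at h2
              exact hi (by simpa using h2)
      · rw [Set.ncard_image_of_injective _ (pair_left_inj v), hS,
          Set.ncard_union_eq ?_ (Set.toFinite _) (Set.toFinite _),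
          Set.ncard_image_of_injective _ Sum.inl_injective,
          Set.ncard_image_of_injective _ Sum.inr_injective, hcompl, hIcard]
        · omega
        · rw [Set.disjoint_left]
          rintro x ⟨a, -, rfl⟩ ⟨i, -, h⟩
          exact absurd h (by simp)
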